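/- For every continuous function u : ℝ → ℝ whose support is contained in [0, β/2], one has the identity ∫₀^{β/2} ∫₀^{β/2} u(σ) F(σ + τ) u(τ) dτ dσ = (2ε(1 − exp(−βε)))⁻¹ · [ (∫₀^{β/2} exp(−σε) u(σ) dσ)² + (∫₀^{β/2} exp((σ − β/2)ε) u(σ) dσ)² ]; in particular this double integral is nonnegative (reflection positivity of the Green's function of −∂τ² + ε² on the circle of length β, with respect to the reflection τ ↦ −τ). -/

import Mathlib

open MeasureTheory intervalIntegral

/-- reflection positivity of the Green's function of `−∂τ² + ε²` on the circle of
length `β`: for continuous `u` supported in `[0, β/2]`,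
`∫₀^{β/2} ∫₀^{β/2} u(σ) F(σ+τ) u(τ) dτ dσ
  = (2ε(1 − e^{−βε}))⁻¹ ((∫₀^{β/2} e^{−σε} u σ dσ)² + (∫₀^{β/2} e^{(σ−β/2)ε} u σ dσ)²) ≥ 0`. -/
theorem stmt6 (β ε : ℝ) (hβ : 0 < β) (hε : 0 < ε) (F : ℝ → ℝ)
    (hper : Function.Periodic F β)
    (hF : ∀ τ ∈ Set.Ico (0:ℝ) β,
      F τ = (Real.exp (-τ * ε) + Real.exp ((τ - β) * ε)) / (2 * ε * (1 - Real.exp (-β * ε))))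
    (u : ℝ → ℝ) (hu : Continuous u) (hsupp : Function.support u ⊆ Set.Icc 0 (β / 2)) :
    (∫ σ in (0:ℝ)..β/2, ∫ τ in (0:ℝ)..β/2, u σ * F (σ + τ) * u τ) =
      (2 * ε * (1 - Real.exp (-β * ε)))⁻¹ *
        ((∫ σ in (0:ℝ)..β/2, Real.exp (-σ * ε) * u σ) ^ 2 +
         (∫ σ in (0:ℝ)..β/2, Real.exp ((σ - β / 2) * ε) * u σ) ^ 2) ∧
    0 ≤ ∫ σ in (0:ℝ)..β/2, ∫ τ in (0:ℝ)..β/2, u σ * F (σ + τ) * u τ := by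
  have hb2 : (0:ℝ) ≤ β / 2 := by linarith
  set C := 2 * ε * (1 - Real.exp (-β * ε)) with hC
  have hexp : Real.exp (-β * ε) < 1 := by
    rw [Real.exp_lt_one_iff]; nlinarith
  have hCpos : 0 < C := by
    have h1 : 0 < 1 - Real.exp (-β * ε) := by linarith
    have := mul_pos hε h1
    nlinarith
  set g1 : ℝ → ℝ := fun σ => Real.exp (-σ * ε) * u σ with hg1
  set g2 : ℝ → ℝ := fun σ => Real.exp ((σ - β / 2) * ε) * u σ with hg2
  have hg1c : Continuous g1 := ((Real.continuous_exp.comp (by continuity)).mul hu)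
  have hg2c : Continuous g2 := ((Real.continuous_exp.comp (by continuity)).mul hu)
  set A := ∫ σ in (0:ℝ)..β/2, g1 σ with hA
  set B := ∫ σ in (0:ℝ)..β/2, g2 σ with hB
  -- pointwise formula for F on the relevant range
  have key : ∀ σ ∈ Set.Icc (0:ℝ) (β/2), ∀ τ ∈ Set.Icc (0:ℝ) (β/2),
      F (σ + τ) = C⁻¹ * (Real.exp (-σ * ε) * Real.exp (-τ * ε)
        + Real.exp ((σ - β/2) * ε) * Real.exp ((τ - β/2) * ε)) := by
    rintro σ ⟨hσ0, hσ⟩ τ ⟨hτ0, hτ⟩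
    rcases lt_or_eq_of_le (show σ + τ ≤ β by linarith) with h | h
    · rw [hF (σ + τ) ⟨by linarith, h⟩]
      rw [show -(σ + τ) * ε = -σ * ε + -τ * ε by ring,
        show (σ + τ - β) * ε = (σ - β/2) * ε + (τ - β/2) * ε by ring,
        Real.exp_add, Real.exp_add, div_eq_inv_mul]
    · have h0 : F (σ + τ) = F 0 := by rw [h, ← zero_add β, hper 0]
      rw [h0, hF 0 ⟨le_refl 0, hβ⟩, ← Real.exp_add, ← Real.exp_add]
      rw [show -σ * ε + -τ * ε = -(σ + τ) * ε by ring, h,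
        show (σ - β/2) * ε + (τ - β/2) * ε = (σ + τ - β) * ε by ring, h]
      rw [div_eq_inv_mul]
      ring_nf
  -- inner integral
  have inner : ∀ σ ∈ Set.Icc (0:ℝ) (β/2),
      (∫ τ in (0:ℝ)..β/2, u σ * F (σ + τ) * u τ)
        = C⁻¹ * (g1 σ * A + g2 σ * B) := by
    intro σ hσ
    have hcongr : (∫ τ in (0:ℝ)..β/2, u σ * F (σ + τ) * u τ)
        = ∫ τ in (0:ℝ)..β/2, C⁻¹ * (g1 σ * g1 τ + g2 σ * g2 τ) := by
      apply intervalIntegral.integral_congr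
      intro τ hτ
      rw [Set.uIcc_of_le hb2] at hτ
      show u σ * F (σ + τ) * u τ = C⁻¹ * (g1 σ * g1 τ + g2 σ * g2 τ)
      rw [key σ hσ τ hτ]
      simp only [hg1, hg2]
      ring
    rw [hcongr, intervalIntegral.integral_const_mul]
    congr 1
    rw [intervalIntegral.integral_add
        ((show Continuous (fun τ => g1 σ * g1 τ) from continuous_const.mul hg1c).intervalIntegrable _ _)
        ((show Continuous (fun τ => g2 σ * g2 τ) from continuous_const.mul hg2c).intervalIntegrable _ _),
      intervalIntegral.integral_const_mul, intervalIntegral.integral_const_mul]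
  have hmain : (∫ σ in (0:ℝ)..β/2, ∫ τ in (0:ℝ)..β/2, u σ * F (σ + τ) * u τ)
      = C⁻¹ * (A ^ 2 + B ^ 2) := by
    have hcongr : (∫ σ in (0:ℝ)..β/2, ∫ τ in (0:ℝ)..β/2, u σ * F (σ + τ) * u τ)
        = ∫ σ in (0:ℝ)..β/2, C⁻¹ * (g1 σ * A + g2 σ * B) := by
      apply intervalIntegral.integral_congr
      intro σ hσ
      rw [Set.uIcc_of_le hb2] at hσ
      exact inner σ hσ
    rw [hcongr, intervalIntegral.integral_const_mul]
    congr 1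
    rw [intervalIntegral.integral_add
        ((show Continuous (fun x => g1 x * A) from hg1c.mul continuous_const).intervalIntegrable _ _)
        ((show Continuous (fun x => g2 x * B) from hg2c.mul continuous_const).intervalIntegrable _ _),
      intervalIntegral.integral_mul_const, intervalIntegral.integral_mul_const]
    ring
  refine ⟨hmain, ?_⟩
  rw [hmain]
  positivity
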